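/- Let F be a compactly supported probability measure on ℝ, m(y) = ∫ φ(y-θ) dF(θ), and define the posterior mean δ(y) = y + m'(y)/m(y). Then δ'(y) = Var(μ | Y=y) ≥ 0, i.e., δ is nondecreasing; equivalently, c(y) = y²/2 + log m(y) is convex. -/

import Mathlib

open MeasureTheory Real

/-- Standard normal density. -/
noncomputable def stdNormalPDF (x : ℝ) : ℝ := (Real.sqrt (2 * π))⁻¹ * Real.exp (-x ^ 2 / 2)

lemma stdNormalPDF_pos (x : ℝ) : 0 < stdNormalPDF x := by
  unfold stdNormalPDF
  positivity

lemma stdNormalPDF_le (x : ℝ) : stdNormalPDF x ≤ (Real.sqrt (2 * π))⁻¹ := by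
  unfold stdNormalPDF
  have h1 : Real.exp (-x ^ 2 / 2) ≤ 1 := by
    rw [Real.exp_le_one_iff]
    nlinarith [sq_nonneg x]
  have : (0:ℝ) < (Real.sqrt (2 * π))⁻¹ := by positivity
  nlinarith

lemma hasDerivAt_stdNormalPDF (x : ℝ) :
    HasDerivAt stdNormalPDF (-x * stdNormalPDF x) x := by
  have h1 : HasDerivAt (fun x : ℝ => -x ^ 2 / 2) (-x) x := by
    have := ((hasDerivAt_pow 2 x).neg).div_const 2
    refine this.congr_deriv ?_
    simp; ring
  have h2 := (h1.exp).const_mul ((Real.sqrt (2 * π))⁻¹)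
  refine h2.congr_deriv ?_
  unfold stdNormalPDF
  ring

lemma continuous_stdNormalPDF : Continuous stdNormalPDF := by
  unfold stdNormalPDF; fun_prop

lemma hasDerivAt_inner (θ x : ℝ) :
    HasDerivAt (fun x => stdNormalPDF (x - θ)) ((θ - x) * stdNormalPDF (x - θ)) x := by
  have h := (hasDerivAt_stdNormalPDF (x - θ)).comp x ((hasDerivAt_id x).sub_const θ)
  refine h.congr_deriv ?_
  ring

lemma hasDerivAt_inner2 (θ x : ℝ) :
    HasDerivAt (fun x => (θ - x) * stdNormalPDF (x - θ))
      (((x - θ) ^ 2 - 1) * stdNormalPDF (x - θ)) x := by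
  have h := ((hasDerivAt_id x).const_sub θ).mul (hasDerivAt_inner θ x)
  refine h.congr_deriv ?_
  simp only [id]
  ring

section Aux
variable {F : Measure ℝ} [IsProbabilityMeasure F] {B : ℝ}

lemma int_of_bound (hae : ∀ᵐ θ ∂F, θ ∈ Set.Icc (-B) B) (g : ℝ → ℝ) (C : ℝ)
    (hg : Continuous g) (hb : ∀ θ ∈ Set.Icc (-B) B, |g θ| ≤ C) : Integrable g F := by
  refine (integrable_const C).mono' hg.aestronglyMeasurable ?_
  exact hae.mono fun θ hθ => by simpa using hb θ hθ

lemma hasDerivAt_m (hae : ∀ᵐ θ ∂F, θ ∈ Set.Icc (-B) B) (y : ℝ) :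
    HasDerivAt (fun x => ∫ θ, stdNormalPDF (x - θ) ∂F)
      (∫ θ, (θ - y) * stdNormalPDF (y - θ) ∂F) y := by
  have key := hasDerivAt_integral_of_dominated_loc_of_deriv_le (μ := F)
    (F := fun x θ => stdNormalPDF (x - θ))
    (F' := fun x θ => (θ - x) * stdNormalPDF (x - θ))
    (bound := fun _ => (B + (|y| + 1)) * (Real.sqrt (2 * π))⁻¹)
    (x₀ := y) (s := Metric.ball y 1) (Metric.ball_mem_nhds y one_pos)
    (Filter.Eventually.of_forall fun x =>
      ((continuous_stdNormalPDF.comp (continuous_const.sub continuous_id)).aestronglyMeasurable))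
    ?_ (((continuous_id.sub continuous_const).mul
      (continuous_stdNormalPDF.comp (continuous_const.sub continuous_id))).aestronglyMeasurable)
    ?_ (integrable_const _) ?_
  · exact key.2
  · exact int_of_bound hae _ ((Real.sqrt (2 * π))⁻¹)
      (continuous_stdNormalPDF.comp (continuous_const.sub continuous_id)) fun θ _ => by
      rw [abs_of_pos (stdNormalPDF_pos _)]; exact stdNormalPDF_le _
  · refine hae.mono fun θ hθ x hx => ?_
    have hφ := stdNormalPDF_pos (x - θ)
    have hφle := stdNormalPDF_le (x - θ)
    have hθB : |θ| ≤ B := abs_le.mpr ⟨hθ.1, hθ.2⟩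
    have hxb : |x| ≤ |y| + 1 := by
      have := mem_ball_iff_norm.mp hx
      rw [Real.norm_eq_abs] at this
      calc |x| = |y + (x - y)| := by ring_nf
        _ ≤ |y| + |x - y| := abs_add_le _ _
        _ ≤ |y| + 1 := by linarith
    rw [Real.norm_eq_abs, abs_mul, abs_of_pos hφ]
    have h1 : |θ - x| ≤ B + (|y| + 1) := by
      calc |θ - x| ≤ |θ| + |x| := abs_sub _ _
        _ ≤ B + (|y| + 1) := by linarith
    have hB : (0:ℝ) ≤ B + (|y| + 1) := le_trans (abs_nonneg _) h1
    exact mul_le_mul h1 hφle hφ.le hB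
  · exact Filter.Eventually.of_forall fun θ x _ => hasDerivAt_inner θ x

lemma hasDerivAt_m' (hae : ∀ᵐ θ ∂F, θ ∈ Set.Icc (-B) B) (y : ℝ) :
    HasDerivAt (fun x => ∫ θ, (θ - x) * stdNormalPDF (x - θ) ∂F)
      (∫ θ, ((y - θ) ^ 2 - 1) * stdNormalPDF (y - θ) ∂F) y := by
  have key := hasDerivAt_integral_of_dominated_loc_of_deriv_le (μ := F)
    (F := fun x θ => (θ - x) * stdNormalPDF (x - θ))
    (F' := fun x θ => ((x - θ) ^ 2 - 1) * stdNormalPDF (x - θ))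
    (bound := fun _ => ((B + (|y| + 1)) ^ 2 + 1) * (Real.sqrt (2 * π))⁻¹)
    (x₀ := y) (s := Metric.ball y 1) (Metric.ball_mem_nhds y one_pos)
    (Filter.Eventually.of_forall fun x =>
      (((continuous_id.sub continuous_const).mul
        (continuous_stdNormalPDF.comp (continuous_const.sub continuous_id))).aestronglyMeasurable))
    ?_ ((((continuous_const.sub continuous_id).pow 2).sub continuous_const).mul
      (continuous_stdNormalPDF.comp (continuous_const.sub continuous_id))
      |>.aestronglyMeasurable)
    ?_ (integrable_const _) ?_
  · exact key.2
  · refine int_of_bound hae _ ((B + (|y| + 1)) * (Real.sqrt (2 * π))⁻¹)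
      ((continuous_id.sub continuous_const).mul
        (continuous_stdNormalPDF.comp (continuous_const.sub continuous_id))) fun θ hθ => ?_
    have hφ := stdNormalPDF_pos (y - θ)
    have hφle := stdNormalPDF_le (y - θ)
    have hθB : |θ| ≤ B := abs_le.mpr ⟨hθ.1, hθ.2⟩
    rw [abs_mul, abs_of_pos hφ]
    have h1 : |θ - y| ≤ B + (|y| + 1) := by
      calc |θ - y| ≤ |θ| + |y| := abs_sub _ _
        _ ≤ B + (|y| + 1) := by linarith
    exact mul_le_mul h1 hφle hφ.le (le_trans (abs_nonneg _) h1)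
  · refine hae.mono fun θ hθ x hx => ?_
    have hφ := stdNormalPDF_pos (x - θ)
    have hφle := stdNormalPDF_le (x - θ)
    have hθB : |θ| ≤ B := abs_le.mpr ⟨hθ.1, hθ.2⟩
    have hxb : |x| ≤ |y| + 1 := by
      have := mem_ball_iff_norm.mp hx
      rw [Real.norm_eq_abs] at this
      calc |x| = |y + (x - y)| := by ring_nf
        _ ≤ |y| + |x - y| := abs_add_le _ _
        _ ≤ |y| + 1 := by linarith
    rw [Real.norm_eq_abs, abs_mul]
    have h1 : |x - θ| ≤ B + (|y| + 1) := by
      calc |x - θ| ≤ |x| + |θ| := abs_sub _ _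
        _ ≤ B + (|y| + 1) := by linarith
    have h2 : |(x - θ) ^ 2 - 1| ≤ (B + (|y| + 1)) ^ 2 + 1 := by
      have hsq : (x - θ) ^ 2 ≤ (B + (|y| + 1)) ^ 2 := by
        rw [← sq_abs]
        exact pow_le_pow_left₀ (abs_nonneg _) h1 2
      rw [abs_sub_le_iff]
      constructor <;> nlinarith [sq_nonneg (x - θ)]
    rw [abs_of_pos hφ]
    exact mul_le_mul h2 hφle hφ.le (by positivity)
  · exact Filter.Eventually.of_forall fun θ x _ => hasDerivAt_inner2 θ x

end Aux


/-- The Tweedie posterior-mean rule `δ(y) = y + m'(y)/m(y)` has derivative equal to the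
posterior variance (hence nonnegative), `δ` is nondecreasing, and
`c(y) = y²/2 + log m(y)` is convex. -/
theorem tweedie_monotone_convex (F : Measure ℝ) [IsProbabilityMeasure F]
    (B : ℝ) (hsupp : F (Set.Icc (-B) B)ᶜ = 0)
    (m δ : ℝ → ℝ)
    (hm : ∀ y, m y = ∫ θ, stdNormalPDF (y - θ) ∂F)
    (hδ : ∀ y, δ y = y + deriv m y / m y) :
    (∀ y, deriv δ y
        = (∫ θ, θ ^ 2 * stdNormalPDF (y - θ) ∂F) / m y
          - ((∫ θ, θ * stdNormalPDF (y - θ) ∂F) / m y) ^ 2) ∧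
    (∀ y, 0 ≤ deriv δ y) ∧ Monotone δ ∧
    ConvexOn ℝ Set.univ (fun y => y ^ 2 / 2 + Real.log (m y)) := by
  have hae : ∀ᵐ θ ∂F, θ ∈ Set.Icc (-B) B := by
    rw [ae_iff]; exact hsupp
  have hc := continuous_stdNormalPDF
  have hcy : ∀ y : ℝ, Continuous (fun θ => stdNormalPDF (y - θ)) := fun y =>
    hc.comp (continuous_const.sub continuous_id)
  have Iphi : ∀ y : ℝ, Integrable (fun θ => stdNormalPDF (y - θ)) F := fun y =>
    int_of_bound hae _ ((Real.sqrt (2 * π))⁻¹) (hcy y) fun θ _ => by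
      rw [abs_of_pos (stdNormalPDF_pos _)]; exact stdNormalPDF_le _
  have I1 : ∀ y : ℝ, Integrable (fun θ => θ * stdNormalPDF (y - θ)) F := fun y =>
    int_of_bound hae _ (|B| * (Real.sqrt (2 * π))⁻¹) (continuous_id.mul (hcy y))
      fun θ hθ => by
        rw [abs_mul, abs_of_pos (stdNormalPDF_pos _)]
        exact mul_le_mul ((abs_le.mpr ⟨hθ.1, hθ.2⟩).trans (le_abs_self B))
          (stdNormalPDF_le _) (stdNormalPDF_pos _).le (abs_nonneg _)
  have I2 : ∀ y : ℝ, Integrable (fun θ => θ ^ 2 * stdNormalPDF (y - θ)) F := fun y =>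
    int_of_bound hae _ (B ^ 2 * (Real.sqrt (2 * π))⁻¹)
      ((continuous_pow 2).mul (hcy y)) fun θ hθ => by
        rw [abs_mul, abs_of_pos (stdNormalPDF_pos _), abs_of_nonneg (sq_nonneg θ)]
        exact mul_le_mul (sq_le_sq' hθ.1 hθ.2) (stdNormalPDF_le _)
          (stdNormalPDF_pos _).le (sq_nonneg B)
  have hmpos : ∀ y, 0 < m y := fun y => by
    rw [hm y, integral_pos_iff_support_of_nonneg (fun θ => (stdNormalPDF_pos _).le) (Iphi y)]
    have hs : Function.support (fun θ => stdNormalPDF (y - θ)) = Set.univ :=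
      Set.eq_univ_of_forall fun θ => (stdNormalPDF_pos _).ne'
    rw [hs]; simp
  have hmfun : m = fun x => ∫ θ, stdNormalPDF (x - θ) ∂F := funext hm
  have Hm : ∀ y, HasDerivAt m (∫ θ, (θ - y) * stdNormalPDF (y - θ) ∂F) y := fun y => by
    rw [hmfun]; exact hasDerivAt_m hae y
  have hderivm : deriv m = fun y => ∫ θ, (θ - y) * stdNormalPDF (y - θ) ∂F :=
    funext fun y => (Hm y).deriv
  have Hm2 : ∀ y, HasDerivAt (deriv m)
      (∫ θ, ((y - θ) ^ 2 - 1) * stdNormalPDF (y - θ) ∂F) y := fun y => by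
    rw [hderivm]; exact hasDerivAt_m' hae y
  have hD1 : ∀ y, (∫ θ, (θ - y) * stdNormalPDF (y - θ) ∂F)
      = (∫ θ, θ * stdNormalPDF (y - θ) ∂F) - y * m y := fun y => by
    rw [hm y,
      show (fun θ => (θ - y) * stdNormalPDF (y - θ))
        = fun θ => θ * stdNormalPDF (y - θ) - y * stdNormalPDF (y - θ) from
        funext fun θ => by ring,
      integral_sub (I1 y) ((Iphi y).const_mul y), integral_const_mul]
  have hD2 : ∀ y, (∫ θ, ((y - θ) ^ 2 - 1) * stdNormalPDF (y - θ) ∂F)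
      = (∫ θ, θ ^ 2 * stdNormalPDF (y - θ) ∂F)
        - 2 * y * (∫ θ, θ * stdNormalPDF (y - θ) ∂F) + (y ^ 2 - 1) * m y := fun y => by
    rw [hm y,
      show (fun θ => ((y - θ) ^ 2 - 1) * stdNormalPDF (y - θ))
        = fun θ => θ ^ 2 * stdNormalPDF (y - θ) - (2 * y) * (θ * stdNormalPDF (y - θ))
          + (y ^ 2 - 1) * stdNormalPDF (y - θ) from funext fun θ => by ring]
    have h1 : Integrable (fun θ => θ ^ 2 * stdNormalPDF (y - θ)
        - 2 * y * (θ * stdNormalPDF (y - θ))) F := (I2 y).sub ((I1 y).const_mul (2 * y))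
    have h2 : Integrable (fun θ => (y ^ 2 - 1) * stdNormalPDF (y - θ)) F :=
      (Iphi y).const_mul _
    rw [integral_add h1 h2, integral_sub (I2 y) ((I1 y).const_mul (2 * y)),
      integral_const_mul, integral_const_mul]
  have hδfun : δ = fun y => y + deriv m y / m y := funext hδ
  have Hδ : ∀ y, HasDerivAt δ
      ((∫ θ, θ ^ 2 * stdNormalPDF (y - θ) ∂F) / m y
        - ((∫ θ, θ * stdNormalPDF (y - θ) ∂F) / m y) ^ 2) y := fun y => by
    have hne : m y ≠ 0 := (hmpos y).ne'
    have h2 : HasDerivAt δ (1 + ((∫ θ, ((y - θ) ^ 2 - 1) * stdNormalPDF (y - θ) ∂F) * m y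
        - deriv m y * (∫ θ, (θ - y) * stdNormalPDF (y - θ) ∂F)) / m y ^ 2) y := by
      rw [hδfun]; exact (hasDerivAt_id y).add ((Hm2 y).div (Hm y) hne)
    convert h2 using 1
    rw [(Hm y).deriv, hD1 y, hD2 y]
    field_simp
    ring
  have hderivδ : ∀ y, deriv δ y
      = (∫ θ, θ ^ 2 * stdNormalPDF (y - θ) ∂F) / m y
        - ((∫ θ, θ * stdNormalPDF (y - θ) ∂F) / m y) ^ 2 := fun y => (Hδ y).deriv
  have hexpand : ∀ y t : ℝ, (∫ θ, (θ - t) ^ 2 * stdNormalPDF (y - θ) ∂F)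
      = (∫ θ, θ ^ 2 * stdNormalPDF (y - θ) ∂F)
        - 2 * t * (∫ θ, θ * stdNormalPDF (y - θ) ∂F) + t ^ 2 * m y := fun y t => by
    rw [hm y,
      show (fun θ => (θ - t) ^ 2 * stdNormalPDF (y - θ))
        = fun θ => θ ^ 2 * stdNormalPDF (y - θ) - (2 * t) * (θ * stdNormalPDF (y - θ))
          + t ^ 2 * stdNormalPDF (y - θ) from funext fun θ => by ring]
    have h1 : Integrable (fun θ => θ ^ 2 * stdNormalPDF (y - θ)
        - 2 * t * (θ * stdNormalPDF (y - θ))) F := (I2 y).sub ((I1 y).const_mul (2 * t))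
    have h2 : Integrable (fun θ => t ^ 2 * stdNormalPDF (y - θ)) F :=
      (Iphi y).const_mul _
    rw [integral_add h1 h2, integral_sub (I2 y) ((I1 y).const_mul (2 * t)),
      integral_const_mul, integral_const_mul]
  have hvar : ∀ y, 0 ≤ (∫ θ, θ ^ 2 * stdNormalPDF (y - θ) ∂F) / m y
      - ((∫ θ, θ * stdNormalPDF (y - θ) ∂F) / m y) ^ 2 := fun y => by
    have hM := hmpos y
    have hne : m y ≠ 0 := hM.ne'
    have hnn : 0 ≤ ∫ θ, (θ - (∫ θ, θ * stdNormalPDF (y - θ) ∂F) / m y) ^ 2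
        * stdNormalPDF (y - θ) ∂F :=
      integral_nonneg fun θ => mul_nonneg (sq_nonneg _) (stdNormalPDF_pos _).le
    rw [hexpand y _] at hnn
    set M1 := ∫ θ, θ * stdNormalPDF (y - θ) ∂F
    set M2 := ∫ θ, θ ^ 2 * stdNormalPDF (y - θ) ∂F
    have key : M2 / m y - (M1 / m y) ^ 2
        = (M2 - 2 * (M1 / m y) * M1 + (M1 / m y) ^ 2 * m y) / m y := by
      field_simp
      ring
    rw [key]
    exact div_nonneg hnn hM.le
  have hnonneg : ∀ y, 0 ≤ deriv δ y := fun y => by rw [hderivδ y]; exact hvar y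
  have hmono : Monotone δ :=
    monotone_of_deriv_nonneg (fun y => (Hδ y).differentiableAt) hnonneg
  refine ⟨hderivδ, hnonneg, hmono, ?_⟩
  have Hc : ∀ y, HasDerivAt (fun y => y ^ 2 / 2 + Real.log (m y)) (δ y) y := fun y => by
    have h1 := (hasDerivAt_pow 2 y).div_const 2
    have h2 := (Hm y).log (hmpos y).ne'
    have h3 := h1.add h2
    refine h3.congr_deriv ?_
    rw [hδ y, (Hm y).deriv]
    push_cast
    ring
  have hcderiv : deriv (fun y => y ^ 2 / 2 + Real.log (m y)) = δ :=
    funext fun y => (Hc y).deriv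
  exact Monotone.convexOn_univ_of_deriv (fun y => (Hc y).differentiableAt)
    (hcderiv ▸ hmono)
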